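/- arXiv:1906.05485 — 2 statements merged into one kernel-verified Lean document; each statement's English description precedes it below -/
import Mathlib

section
/- Let ε > 0, let M ≥ 1 be an integer, and let c₀ > 0, c₂ > 0 be constants. Suppose: N, T, K, P > 1 with N^ε ≤ K ≤ T^{1−ε}, X = P²K²/N; V is smooth, supported in [1,2], with total variation Var(V) = ∫|V'| ≤ 1; φ : (1/2, 5/2) → ℝ is smooth with c₀ ≤ |φ''(x)| ≤ c₂ for all x ∈ (1/2, 5/2); p₁, p₂ are primes in [P, 2P]; r₁, r₂ are integers; γ is real; U : ℝ → ℝ is a fixed smooth function supported in [1,2]. Then there are constants C and T₀, depending only on ε, M, c₀, c₂, U and sup|U|, such that for all T ≥ T₀ and all real x, |ℒ(x)| ≤ C/T. -/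
set_option maxHeartbeats 1000000

open MeasureTheory intervalIntegral Set


/-- `e(t) = exp(2πit)`. -/
noncomputable def e (t : ℝ) : ℂ := Complex.exp (2 * (Real.pi : ℂ) * Complex.I * t)

lemma norm_e (t : ℝ) : ‖e t‖ = 1 := by
  have h : (2 * (Real.pi:ℂ) * Complex.I * t) = ((2*Real.pi*t : ℝ) : ℂ) * Complex.I := by
    push_cast; ring
  rw [e, h, Complex.norm_exp_ofReal_mul_I]

lemma e_neg (t : ℝ) : e (-t) = (starRingEnd ℂ) (e t) := by
  have h : (starRingEnd ℂ) (2 * (Real.pi:ℂ) * Complex.I * t) =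
      2 * (Real.pi:ℂ) * Complex.I * (-t : ℝ) := by
    simp only [map_mul, Complex.conj_I, Complex.conj_ofReal, map_ofNat]
    push_cast; ring
  rw [e, e, ← Complex.exp_conj, h]

lemma continuous_e : Continuous e := by
  unfold e; fun_prop

lemma hasDerivAt_e {f : ℝ → ℝ} {d x : ℝ} (hf : HasDerivAt f d x) :
    HasDerivAt (fun t => e (f t)) (2 * Real.pi * Complex.I * d * e (f x)) x := by
  have h1 : HasDerivAt (fun t => ((f t : ℂ))) (d : ℂ) x := hf.ofReal_comp
  have h2 : HasDerivAt (fun t => 2 * (Real.pi:ℂ) * Complex.I * (f t : ℂ))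
      (2 * (Real.pi:ℂ) * Complex.I * d) x := h1.const_mul _
  simpa [e, mul_comm, mul_assoc, mul_left_comm] using h2.cexp

lemma vdc_nostat (g g' g'' : ℝ → ℝ) (α β S : ℝ) (hαβ : α ≤ β) (hS : 0 < S)
    (hg : ∀ x ∈ Icc α β, HasDerivAt g (g' x) x)
    (hg' : ∀ x ∈ Icc α β, HasDerivAt g' (g'' x) x)
    (hcont : ContinuousOn g'' (Icc α β))
    (hpos : ∀ x ∈ Icc α β, 0 ≤ g'' x)
    (hbig : ∀ x ∈ Icc α β, S ≤ |g' x|) :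
    ‖∫ x in α..β, e (g x)‖ ≤ 1 / S := by
  have huIcc : Set.uIcc α β = Icc α β := uIcc_of_le hαβ
  have hπ : (0:ℝ) < Real.pi := Real.pi_pos
  have hgne : ∀ x ∈ Icc α β, g' x ≠ 0 := by
    intro x hx h
    have h2 := hbig x hx
    rw [h] at h2; simp at h2; linarith
  set c : ℂ := 2 * Real.pi * Complex.I with hc
  have hcne : c ≠ 0 := by
    simp [hc, Complex.I_ne_zero, Real.pi_ne_zero, Complex.ofReal_ne_zero]
  have hnc : ‖c‖ = 2 * Real.pi := by
    simp [hc, map_mul,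
      abs_of_nonneg Real.pi_nonneg]
  set u : ℝ → ℂ := fun x => (c * g' x)⁻¹ with hu
  set u' : ℝ → ℂ := fun x => -(c * g'' x) / (c * g' x) ^ 2 with hu'
  set v : ℝ → ℂ := fun x => e (g x) with hv
  set v' : ℝ → ℂ := fun x => c * g' x * e (g x) with hv'
  have hcg'ne : ∀ x ∈ Icc α β, c * (g' x : ℂ) ≠ 0 := fun x hx =>
    mul_ne_zero hcne (by exact_mod_cast hgne x hx)
  have hdu : ∀ x ∈ Icc α β, HasDerivAt u (u' x) x := by
    intro x hx
    have h1 : HasDerivAt (fun y => c * (g' y : ℂ)) (c * g'' x) x :=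
      ((hg' x hx).ofReal_comp).const_mul c
    have h2 := (hasDerivAt_inv (hcg'ne x hx)).comp x h1
    have h3 : HasDerivAt u (-((c * (g' x:ℂ))^2)⁻¹ * (c * g'' x)) x := by
      simpa only [hu, Function.comp_def] using h2
    convert h3 using 1
    simp only [hu']
    ring
  have hdv : ∀ x ∈ Icc α β, HasDerivAt v (v' x) x := by
    intro x hx
    have h2 := hasDerivAt_e (hg x hx)
    simpa [hv, hv', hc, mul_comm, mul_assoc, mul_left_comm] using h2
  have hg'cont : ContinuousOn g' (Icc α β) := fun x hx =>
    ((hg' x hx).continuousAt).continuousWithinAt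
  have hgcont : ContinuousOn g (Icc α β) := fun x hx =>
    ((hg x hx).continuousAt).continuousWithinAt
  have hcgcont : ContinuousOn (fun x => c * (g' x : ℂ)) (Icc α β) :=
    continuousOn_const.mul (Complex.continuous_ofReal.comp_continuousOn hg'cont)
  have hucont : ContinuousOn u (Icc α β) := hcgcont.inv₀ hcg'ne
  have hvcont : ContinuousOn v (Icc α β) := continuous_e.comp_continuousOn hgcont
  have hu'cont : ContinuousOn u' (Icc α β) := by
    apply ContinuousOn.div
    · exact (continuousOn_const.mul
        (Complex.continuous_ofReal.comp_continuousOn hcont)).neg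
    · exact hcgcont.pow 2
    · intro x hx; exact pow_ne_zero 2 (hcg'ne x hx)
  have hv'cont : ContinuousOn v' (Icc α β) := hcgcont.mul hvcont
  have hu'int : IntervalIntegrable u' volume α β := by
    rw [intervalIntegrable_iff_integrableOn_Icc_of_le hαβ] at *
    exact hu'cont.integrableOn_compact isCompact_Icc
  have hv'int : IntervalIntegrable v' volume α β := by
    rw [intervalIntegrable_iff_integrableOn_Icc_of_le hαβ]
    exact hv'cont.integrableOn_compact isCompact_Icc
  have hibp : ∫ x in α..β, u x * v' x
      = u β * v β - u α * v α - ∫ x in α..β, u' x * v x := by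
    apply intervalIntegral.integral_mul_deriv_eq_deriv_mul_of_hasDerivAt
    · rwa [huIcc]
    · rwa [huIcc]
    · intro x hx
      exact hdu x (Icc_subset_Icc (by simp [min_eq_left hαβ]) (by simp [max_eq_right hαβ])
        (Ioo_subset_Icc_self hx))
    · intro x hx
      exact hdv x (Icc_subset_Icc (by simp [min_eq_left hαβ]) (by simp [max_eq_right hαβ])
        (Ioo_subset_Icc_self hx))
    · exact hu'int
    · exact hv'int
  have heq : ∫ x in α..β, e (g x) = ∫ x in α..β, u x * v' x := by
    apply intervalIntegral.integral_congr
    intro x hx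
    rw [huIcc] at hx
    simp only [hu, hv']
    rw [← mul_assoc, inv_mul_cancel₀ (hcg'ne x hx), one_mul]
  -- norms
  have hnu : ∀ x ∈ Icc α β, ‖u x‖ ≤ 1 / (2 * Real.pi * S) := by
    intro x hx
    simp only [hu, norm_inv, norm_mul, hnc, Complex.norm_real, Real.norm_eq_abs]
    rw [one_div]
    apply inv_anti₀ (by positivity)
    have h3 := hbig x hx
    nlinarith
  set W : ℝ → ℝ := fun x => g'' x / (2 * Real.pi * (g' x) ^ 2) with hW
  have hnu' : ∀ x ∈ Icc α β, ‖u' x * v x‖ = W x := by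
    intro x hx
    rw [norm_mul]
    have hve : ‖v x‖ = 1 := norm_e _
    rw [hve, mul_one]
    simp only [hu', norm_div, norm_neg, norm_mul, norm_pow, hnc,
      Complex.norm_real, Real.norm_eq_abs, hW]
    rw [abs_of_nonneg (hpos x hx), mul_pow, sq_abs]
    have h3 := hgne x hx
    field_simp
  have hH : ∀ x ∈ Icc α β, HasDerivAt (fun y => -(2*Real.pi)⁻¹ * (g' y)⁻¹) (W x) x := by
    intro x hx
    have h1 : HasDerivAt (fun y => -(2*Real.pi)⁻¹ * (g' y)⁻¹)
        (-(2*Real.pi)⁻¹ * (-g'' x / g' x ^ 2)) x :=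
      ((hg' x hx).inv (hgne x hx)).const_mul (-(2*Real.pi)⁻¹)
    convert h1 using 1
    simp only [hW]
    have h3 := hgne x hx
    field_simp
  have hWcont : ContinuousOn W (Icc α β) := by
    apply hcont.div (continuousOn_const.mul (hg'cont.pow 2))
    intro x hx
    have h3 := hgne x hx
    exact mul_ne_zero (by positivity) (pow_ne_zero 2 h3)
  have hWint : IntervalIntegrable W volume α β := by
    rw [intervalIntegrable_iff_integrableOn_Icc_of_le hαβ]
    exact hWcont.integrableOn_compact isCompact_Icc
  have hWval : ∫ x in α..β, W x
      = -(2*Real.pi)⁻¹ * (g' β)⁻¹ - (-(2*Real.pi)⁻¹ * (g' α)⁻¹) := by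
    apply intervalIntegral.integral_eq_sub_of_hasDerivAt
    · intro x hx; rw [huIcc] at hx; exact hH x hx
    · exact hWint
  have hmemα : α ∈ Icc α β := ⟨le_refl _, hαβ⟩
  have hmemβ : β ∈ Icc α β := ⟨hαβ, le_refl _⟩
  have hinvS : ∀ x ∈ Icc α β, |(g' x)⁻¹| ≤ S⁻¹ := by
    intro x hx
    rw [abs_inv]
    exact inv_anti₀ hS (hbig x hx)
  have hApos : (0:ℝ) < (2*Real.pi)⁻¹ := by positivity
  have hWb : ∫ x in α..β, W x ≤ (2*Real.pi)⁻¹ * (2 * S⁻¹) := by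
    rw [hWval]
    have h1 := abs_le.mp (hinvS α hmemα)
    have h2 := abs_le.mp (hinvS β hmemβ)
    nlinarith [h1.1, h1.2, h2.1, h2.2]
  have hIb : ‖∫ x in α..β, u' x * v x‖ ≤ (2*Real.pi)⁻¹ * (2 * S⁻¹) := by
    calc ‖∫ x in α..β, u' x * v x‖ ≤ ∫ x in α..β, ‖u' x * v x‖ :=
          intervalIntegral.norm_integral_le_integral_norm hαβ
      _ = ∫ x in α..β, W x := by
          apply intervalIntegral.integral_congr
          intro x hx; rw [huIcc] at hx; exact hnu' x hx
      _ ≤ _ := hWb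
  rw [heq, hibp]
  have hb1 : ‖u β * v β‖ ≤ 1 / (2*Real.pi*S) := by
    rw [norm_mul]
    have hve : ‖v β‖ = 1 := norm_e _
    rw [hve, mul_one]; exact hnu β hmemβ
  have hb2 : ‖u α * v α‖ ≤ 1 / (2*Real.pi*S) := by
    rw [norm_mul]
    have hve : ‖v α‖ = 1 := norm_e _
    rw [hve, mul_one]; exact hnu α hmemα
  have htri : ‖u β * v β - u α * v α - ∫ x in α..β, u' x * v x‖
      ≤ ‖u β * v β‖ + ‖u α * v α‖ + ‖∫ x in α..β, u' x * v x‖ := by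
    calc ‖u β * v β - u α * v α - ∫ x in α..β, u' x * v x‖
        ≤ ‖u β * v β - u α * v α‖ + ‖∫ x in α..β, u' x * v x‖ := norm_sub_le _ _
      _ ≤ _ := by
          have := norm_sub_le (u β * v β) (u α * v α)
          linarith
  have hSinv : (0:ℝ) < S⁻¹ := inv_pos.mpr hS
  have hkey : (1/(2*Real.pi*S)) + (1/(2*Real.pi*S)) + (2*Real.pi)⁻¹*(2*S⁻¹)
      = 2/Real.pi * S⁻¹ := by
    field_simp
    ring
  have hfin : 2/Real.pi * S⁻¹ ≤ 1/S := by
    rw [one_div]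
    apply mul_le_of_le_one_left (le_of_lt hSinv)
    rw [div_le_one hπ]
    nlinarith [Real.pi_gt_three]
  linarith [htri, hb1, hb2, hIb]

lemma vdc_second (g g' g'' : ℝ → ℝ) (a b lam : ℝ) (hab : a ≤ b) (hlam : 0 < lam)
    (hg : ∀ x ∈ Icc a b, HasDerivAt g (g' x) x)
    (hg' : ∀ x ∈ Icc a b, HasDerivAt g' (g'' x) x)
    (hcont : ContinuousOn g'' (Icc a b))
    (hlow : ∀ x ∈ Icc a b, lam ≤ g'' x) :
    ∀ t ∈ Icc a b, ‖∫ x in a..t, e (g x)‖ ≤ 4 / Real.sqrt lam := by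
  intro t ht
  set S := Real.sqrt lam with hSdef
  have hS : 0 < S := Real.sqrt_pos.mpr hlam
  have hS2 : S * S = lam := Real.mul_self_sqrt hlam.le
  have hat : a ≤ t := ht.1
  have hsub : Icc a t ⊆ Icc a b := Icc_subset_Icc le_rfl ht.2
  have hg'cont : ContinuousOn g' (Icc a b) := fun x hx =>
    ((hg' x hx).continuousAt).continuousWithinAt
  have hgcont : ContinuousOn g (Icc a b) := fun x hx =>
    ((hg x hx).continuousAt).continuousWithinAt
  have hfcont : ContinuousOn (fun x => e (g x)) (Icc a b) :=
    continuous_e.comp_continuousOn hgcont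
  -- mean value gap estimate
  have hgap : ∀ x ∈ Icc a t, ∀ y ∈ Icc a t, x ≤ y → g' x + lam * (y - x) ≤ g' y := by
    intro x hx y hy hxy
    rcases eq_or_lt_of_le hxy with rfl | hlt
    · simp
    · have hxy_sub : Icc x y ⊆ Icc a b := fun z hz =>
        hsub ⟨le_trans hx.1 hz.1, le_trans hz.2 hy.2⟩
      obtain ⟨z, hz, hzeq⟩ := exists_hasDerivAt_eq_slope g' g'' hlt
        (hg'cont.mono hxy_sub)
        (fun w hw => hg' w (hxy_sub (Ioo_subset_Icc_self hw)))
      have hzl : lam ≤ (g' y - g' x) / (y - x) := by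
        rw [← hzeq]
        exact hlow z (hxy_sub (Ioo_subset_Icc_self hz))
      rw [le_div_iff₀ (by linarith)] at hzl
      linarith
  -- integrability on subintervals
  have hint : ∀ u v : ℝ, u ∈ Icc a t → v ∈ Icc a t →
      IntervalIntegrable (fun x => e (g x)) volume u v := by
    intro u v hu hv
    apply ContinuousOn.intervalIntegrable
    apply hfcont.mono
    intro z hz
    rw [uIcc] at hz
    exact hsub ⟨le_trans (le_min hu.1 hv.1) hz.1, le_trans hz.2 (max_le hu.2 hv.2)⟩
  -- side estimate
  have hside : ∀ α β : ℝ, α ∈ Icc a t → β ∈ Icc a t → α ≤ β →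
      (∀ x ∈ Icc α β, S ≤ |g' x|) → ‖∫ x in α..β, e (g x)‖ ≤ 1 / S := by
    intro α β hα hβ hαβ hbig
    have hsub2 : Icc α β ⊆ Icc a b := fun z hz =>
      hsub ⟨le_trans hα.1 hz.1, le_trans hz.2 hβ.2⟩
    exact vdc_nostat g g' g'' α β S hαβ hS (fun x hx => hg x (hsub2 hx))
      (fun x hx => hg' x (hsub2 hx)) (hcont.mono hsub2)
      (fun x hx => le_trans hlam.le (hlow x (hsub2 hx))) hbig
  have hmema : a ∈ Icc a t := ⟨le_rfl, hat⟩
  have hmemt : t ∈ Icc a t := ⟨hat, le_rfl⟩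
  have h14 : (1:ℝ)/S ≤ 4/S := by
    apply div_le_div_of_nonneg_right (by norm_num) hS.le  -- try

  rcases le_or_gt S (g' a) with hA | hA
  · -- g' ≥ S everywhere
    have hbig : ∀ x ∈ Icc a t, S ≤ |g' x| := by
      intro x hx
      have h1 := hgap a hmema x hx hx.1
      have h2 : S ≤ g' x := by nlinarith [hx.1]
      exact le_trans h2 (le_abs_self _)
    exact le_trans (hside a t hmema hmemt hat hbig) h14
  rcases le_or_gt (g' t) (-S) with hB | hB
  · have hbig : ∀ x ∈ Icc a t, S ≤ |g' x| := by
      intro x hx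
      have h1 := hgap x hx t hmemt hx.2
      have h2 : g' x ≤ -S := by nlinarith [hx.2]
      have h3 : S ≤ -g' x := by linarith
      exact le_trans h3 (neg_le_abs _)
    exact le_trans (hside a t hmema hmemt hat hbig) h14
  -- main case
  obtain ⟨u, humem, hulow, hucase⟩ :
      ∃ u ∈ Icc a t, -S ≤ g' u ∧ (u = a ∨ g' u = -S) := by
    by_cases h0 : -S ≤ g' a
    · exact ⟨a, hmema, h0, Or.inl rfl⟩
    · push_neg at h0
      obtain ⟨u, humem, hueq⟩ := intermediate_value_Icc hat (hg'cont.mono hsub)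
        (⟨h0.le, hB.le⟩ : -S ∈ Icc (g' a) (g' t))
      exact ⟨u, humem, le_of_eq hueq.symm, Or.inr hueq⟩
  obtain ⟨v, hvmem, hvhigh, hvcase⟩ :
      ∃ v ∈ Icc a t, g' v ≤ S ∧ (v = t ∨ g' v = S) := by
    by_cases h0 : g' t ≤ S
    · exact ⟨t, hmemt, h0, Or.inl rfl⟩
    · push_neg at h0
      obtain ⟨v, hvmem, hveq⟩ := intermediate_value_Icc hat (hg'cont.mono hsub)
        (⟨hA.le, h0.le⟩ : S ∈ Icc (g' a) (g' t))
      exact ⟨v, hvmem, le_of_eq hveq, Or.inr hveq⟩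
  have huv : u ≤ v := by
    by_contra hcon
    push_neg at hcon
    rcases hucase with rfl | hueq
    · exact absurd hvmem.1 (not_le.mpr hcon)
    · rcases hvcase with rfl | hveq
      · exact absurd humem.2 (not_le.mpr hcon)
      · have := hgap v hvmem u humem hcon.le
        nlinarith
  have hsplit : ∫ x in a..t, e (g x) =
      (∫ x in a..u, e (g x)) + (∫ x in u..v, e (g x)) + (∫ x in v..t, e (g x)) := by
    have h2 := integral_add_adjacent_intervals (hint u v humem hvmem) (hint v t hvmem hmemt)
    have h1 := integral_add_adjacent_intervals (hint a u hmema humem)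
      ((hint u v humem hvmem).trans (hint v t hvmem hmemt))
    rw [← h1, ← h2]
    ring
  have hleft : ‖∫ x in a..u, e (g x)‖ ≤ 1 / S := by
    rcases hucase with rfl | hueq
    · rw [intervalIntegral.integral_same]
      simp
      positivity
    · apply hside a u hmema humem humem.1
      intro x hx
      have hx' : x ∈ Icc a t := ⟨hx.1, le_trans hx.2 humem.2⟩
      have h1 := hgap x hx' u humem hx.2
      have h2 : g' x ≤ -S := by nlinarith [hx.2]
      have h3 : S ≤ -g' x := by linarith
      exact le_trans h3 (neg_le_abs _)
  have hright : ‖∫ x in v..t, e (g x)‖ ≤ 1 / S := by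
    rcases hvcase with rfl | hveq
    · rw [intervalIntegral.integral_same]
      simp
      positivity
    · apply hside v t hvmem hmemt hvmem.2
      intro x hx
      have hx' : x ∈ Icc a t := ⟨le_trans hvmem.1 hx.1, hx.2⟩
      have h1 := hgap v hvmem x hx' hx.1
      have h2 : S ≤ g' x := by nlinarith [hx.1]
      exact le_trans h2 (le_abs_self _)
  have hmid : ‖∫ x in u..v, e (g x)‖ ≤ 2 / S := by
    have h1 : ‖∫ x in u..v, e (g x)‖ ≤ 1 * |v - u| := by
      apply intervalIntegral.norm_integral_le_of_norm_le_const
      intro x _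
      rw [norm_e]
    have h2 : |v - u| = v - u := abs_of_nonneg (by linarith)
    have h3 := hgap u humem v hvmem huv
    have h4 : v - u ≤ 2 / S := by
      rw [le_div_iff₀ hS]
      nlinarith
    calc ‖∫ x in u..v, e (g x)‖ ≤ 1 * |v - u| := h1
      _ = v - u := by rw [h2, one_mul]
      _ ≤ 2 / S := h4
  rw [hsplit]
  calc ‖(∫ x in a..u, e (g x)) + (∫ x in u..v, e (g x)) + (∫ x in v..t, e (g x))‖
      ≤ ‖∫ x in a..u, e (g x)‖ + ‖∫ x in u..v, e (g x)‖ + ‖∫ x in v..t, e (g x)‖ :=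
        norm_add₃_le
    _ ≤ 1/S + 2/S + 1/S := by linarith
    _ = 4/S := by ring

lemma intervalIntegral_conj {f : ℝ → ℂ} {a b : ℝ} :
    ∫ x in a..b, (starRingEnd ℂ) (f x) = (starRingEnd ℂ) (∫ x in a..b, f x) := by
  rw [intervalIntegral, intervalIntegral, integral_conj, integral_conj, ← map_sub]

lemma vdc_second' (g g' g'' : ℝ → ℝ) (a b lam : ℝ) (hab : a ≤ b) (hlam : 0 < lam)
    (hg : ∀ x ∈ Icc a b, HasDerivAt g (g' x) x)
    (hg' : ∀ x ∈ Icc a b, HasDerivAt g' (g'' x) x)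
    (hcont : ContinuousOn g'' (Icc a b))
    (hlow : (∀ x ∈ Icc a b, lam ≤ g'' x) ∨ (∀ x ∈ Icc a b, g'' x ≤ -lam)) :
    ∀ t ∈ Icc a b, ‖∫ x in a..t, e (g x)‖ ≤ 4 / Real.sqrt lam := by
  rcases hlow with h | h
  · exact vdc_second g g' g'' a b lam hab hlam hg hg' hcont h
  · intro t ht
    have key := vdc_second (fun x => -g x) (fun x => -g' x) (fun x => -g'' x) a b lam hab hlam
      (fun x hx => (hg x hx).neg) (fun x hx => (hg' x hx).neg) hcont.neg
      (fun x hx => by show lam ≤ -g'' x; linarith [h x hx]) t ht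
    have heq : ∫ x in a..t, e (g x)
        = (starRingEnd ℂ) (∫ x in a..t, e (-g x)) := by
      rw [← _root_.intervalIntegral_conj]
      apply intervalIntegral.integral_congr
      intro x _
      show e (g x) = (starRingEnd ℂ) (e (-g x))
      rw [← e_neg, neg_neg]
    rw [heq, RCLike.norm_conj]
    exact key

lemma vdc_weighted (g : ℝ → ℝ) (V : ℝ → ℂ) (a b B : ℝ) (s : Set ℝ)
    (hab : a ≤ b) (hB : 0 ≤ B)
    (hs : IsOpen s) (hss : Icc a b ⊆ s)
    (hgc : ContinuousOn (fun x => e (g x)) s)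
    (hV : ContDiff ℝ (⊤ : ℕ∞) V) (hVa : V a = 0) (hVb : V b = 0)
    (hsup : ∀ t ∈ Icc a b, ‖∫ x in a..t, e (g x)‖ ≤ B) :
    ‖∫ x in a..b, V x * e (g x)‖ ≤ B * ∫ x in a..b, ‖deriv V x‖ := by
  have huIcc : Set.uIcc a b = Icc a b := uIcc_of_le hab
  set f : ℝ → ℂ := fun x => e (g x) with hf
  set I : ℝ → ℂ := fun t => ∫ x in a..t, f x with hI
  have hgc' : ∀ t ∈ Icc a b, ContinuousAt f t := fun t ht =>
    hgc.continuousAt (hs.mem_nhds (hss ht))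
  have hfc : ContinuousOn f (Icc a b) := fun x hx => (hgc' x hx).continuousWithinAt
  have hfint : ∀ u v : ℝ, u ∈ Icc a b → v ∈ Icc a b →
      IntervalIntegrable f volume u v := by
    intro u v hu hv
    apply ContinuousOn.intervalIntegrable
    apply hfc.mono
    intro z hz
    rw [uIcc] at hz
    exact ⟨le_trans (le_min hu.1 hv.1) hz.1, le_trans hz.2 (max_le hu.2 hv.2)⟩
  have hmema : a ∈ Icc a b := ⟨le_rfl, hab⟩
  have hdI : ∀ t ∈ Icc a b, HasDerivAt I (f t) t := by
    intro t ht
    exact intervalIntegral.integral_hasDerivAt_right (hfint a t hmema ht)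
      (ContinuousOn.stronglyMeasurableAtFilter hs hgc t (hss ht)) (hgc' t ht)
  have hIcont : ContinuousOn I (Icc a b) := fun x hx =>
    ((hdI x hx).continuousAt).continuousWithinAt
  have hVd : ∀ x, HasDerivAt V (deriv V x) x := fun x =>
    (hV.differentiable (by simp)).differentiableAt.hasDerivAt
  have hdVc : Continuous (deriv V) := hV.continuous_deriv (by simp)
  have hibp : ∫ x in a..b, V x * f x
      = V b * I b - V a * I a - ∫ x in a..b, deriv V x * I x := by
    apply intervalIntegral.integral_mul_deriv_eq_deriv_mul_of_hasDerivAt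
    · exact hV.continuous.continuousOn
    · rwa [huIcc]
    · intro x hx
      exact hVd x
    · intro x hx
      rw [min_eq_left hab, max_eq_right hab] at hx
      exact hdI x (Ioo_subset_Icc_self hx)
    · exact hdVc.intervalIntegrable a b
    · rw [intervalIntegrable_iff_integrableOn_Icc_of_le hab]
      exact hfc.integrableOn_compact isCompact_Icc
  rw [hibp, hVa, hVb]
  rw [show (0:ℂ) * I b - 0 * I a - (∫ x in a..b, deriv V x * I x)
      = -(∫ x in a..b, deriv V x * I x) by ring, norm_neg]
  calc ‖∫ x in a..b, deriv V x * I x‖ ≤ ∫ x in a..b, ‖deriv V x * I x‖ :=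
        intervalIntegral.norm_integral_le_integral_norm hab
    _ ≤ ∫ x in a..b, ‖deriv V x‖ * B := by
        apply intervalIntegral.integral_mono_on hab
        · rw [intervalIntegrable_iff_integrableOn_Icc_of_le hab]
          apply ContinuousOn.integrableOn_compact isCompact_Icc
          have : ContinuousOn (fun x => ‖deriv V x‖ * ‖I x‖) (Icc a b) :=
            hdVc.norm.continuousOn.mul hIcont.norm
          exact this.congr (fun x _ => norm_mul _ _)
        · exact (hdVc.norm.mul continuous_const).intervalIntegrable a b
        · intro x hx
          rw [norm_mul]
          exact mul_le_mul_of_nonneg_left (hsup x hx) (norm_nonneg _)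
    _ = B * ∫ x in a..b, ‖deriv V x‖ := by
        rw [← intervalIntegral.integral_const_mul]
        apply intervalIntegral.integral_congr
        intro x _
        ring


/-- The oscillatory integral
`𝒥(y,r,p) = ∫_0^∞ V(x) e(Tφ(x) + γNx + 2√(Nxy)/(√M p) − rNx/p) dx`. -/
noncomputable def Jcal (V : ℝ → ℂ) (φ : ℝ → ℝ) (M : ℕ) (N T γ : ℝ) (p : ℕ) (r : ℤ)
    (y : ℝ) : ℂ :=
  ∫ x in Set.Ioi (0 : ℝ),
    V x * e (T * φ x + γ * N * x + 2 * Real.sqrt (N * x * y) / (Real.sqrt M * p)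
      - r * N * x / p)

/-- The integral `ℒ(x) = ∫_0^∞ U(y) 𝒥(MXy,r₁,p₁) conj(𝒥(MXy,r₂,p₂)) e(−xy) dy`. -/
noncomputable def Lcal (U : ℝ → ℝ) (V : ℝ → ℂ) (φ : ℝ → ℝ) (M : ℕ) (N T γ X : ℝ)
    (p₁ p₂ : ℕ) (r₁ r₂ : ℤ) (x : ℝ) : ℂ :=
  ∫ y in Set.Ioi (0 : ℝ),
    (U y : ℂ) * Jcal V φ M N T γ p₁ r₁ ((M : ℝ) * X * y) *
      (starRingEnd ℂ) (Jcal V φ M N T γ p₂ r₂ ((M : ℝ) * X * y)) * e (-(x * y))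

lemma Jcal_bound (c₀ : ℝ) (hc₀ : 0 < c₀) (M : ℕ) (N T γ : ℝ) (hT : 0 < T)
    (V : ℝ → ℂ) (φ : ℝ → ℝ) (p : ℕ) (r : ℤ) (yy : ℝ)
    (hV : ContDiff ℝ (⊤ : ℕ∞) V) (hVsupp : Function.support V ⊆ Icc 1 2)
    (hVar : (∫ x in (1/2 : ℝ)..(5/2), ‖deriv V x‖) ≤ 1)
    (hφ : ContDiffOn ℝ (⊤ : ℕ∞) φ (Ioo (1/2) (5/2)))
    (hφ'' : ∀ x ∈ Ioo ((1:ℝ)/2) (5/2),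
      c₀ ≤ |iteratedDerivWithin 2 φ (Ioo (1/2) (5/2)) x|)
    (hNy : 0 ≤ N * yy)
    (hp : 0 < Real.sqrt M * p)
    (hb : 2 * Real.sqrt (N * yy) / (Real.sqrt M * p) ≤ T * c₀) :
    ‖Jcal V φ M N T γ p r yy‖ ≤ 4 / Real.sqrt (T * c₀ / 2) := by
  set s : Set ℝ := Ioo (1/2 : ℝ) (5/2) with hs_def
  have hs_open : IsOpen s := isOpen_Ioo
  have hs_unique : UniqueDiffOn ℝ s := hs_open.uniqueDiffOn
  set bb : ℝ := 2 * Real.sqrt (N * yy) / (Real.sqrt M * p) with hbb_def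
  have hbb0 : 0 ≤ bb := by
    apply div_nonneg _ hp.le
    positivity
  set φ₁ : ℝ → ℝ := derivWithin φ s with hφ₁_def
  set φ₂ : ℝ → ℝ := derivWithin φ₁ s with hφ₂_def
  have hφ₁s : ContDiffOn ℝ (⊤ : ℕ∞) φ₁ s := hφ.derivWithin hs_unique (by simp)
  have hφ₂s : ContDiffOn ℝ (⊤ : ℕ∞) φ₂ s := hφ₁s.derivWithin hs_unique (by simp)
  have hφ₂cont : ContinuousOn φ₂ s := hφ₂s.continuousOn
  have hφ₁cont : ContinuousOn φ₁ s := hφ₁s.continuousOn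
  have hd1 : ∀ x ∈ s, HasDerivAt φ (φ₁ x) x := by
    intro x hx
    have h := (hφ.differentiableOn (by simp) x hx).differentiableAt (hs_open.mem_nhds hx)
    rw [show φ₁ x = deriv φ x from derivWithin_of_isOpen hs_open hx]
    exact h.hasDerivAt
  have hd2 : ∀ x ∈ s, HasDerivAt φ₁ (φ₂ x) x := by
    intro x hx
    have h := (hφ₁s.differentiableOn (by simp) x hx).differentiableAt (hs_open.mem_nhds hx)
    rw [show φ₂ x = deriv φ₁ x from derivWithin_of_isOpen hs_open hx]
    exact h.hasDerivAt
  have hiter : ∀ x ∈ s, iteratedDerivWithin 2 φ s x = φ₂ x := by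
    intro x hx
    rw [show (2:ℕ) = 1 + 1 from rfl, iteratedDerivWithin_succ',
      iteratedDerivWithin_one]
  have habs : ∀ x ∈ s, c₀ ≤ |φ₂ x| := by
    intro x hx
    rw [← hiter x hx]
    exact hφ'' x hx
  have hordconn : Set.OrdConnected s := Set.ordConnected_Ioo
  have hsgn : (∀ x ∈ s, c₀ ≤ φ₂ x) ∨ (∀ x ∈ s, φ₂ x ≤ -c₀) := by
    by_cases hall : ∀ x ∈ s, 0 < φ₂ x
    · left
      intro x hx
      have h1 := habs x hx
      rw [abs_of_pos (hall x hx)] at h1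
      exact h1
    · right
      push_neg at hall
      obtain ⟨x₀, hx₀, hx₀le⟩ := hall
      intro x hx
      by_contra hcon
      push_neg at hcon
      have hxpos : 0 < φ₂ x := by
        rcases abs_cases (φ₂ x) with ⟨h1, _⟩ | ⟨h1, h2⟩
        · have := habs x hx; rw [h1] at this; linarith
        · have := habs x hx; rw [h1] at this; linarith
      have huIccs : uIcc x₀ x ⊆ s := hordconn.uIcc_subset hx₀ hx
      have h0mem : (0:ℝ) ∈ uIcc (φ₂ x₀) (φ₂ x) := by
        rw [Set.mem_uIcc]
        left
        exact ⟨hx₀le, hxpos.le⟩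
      obtain ⟨z, hz, hz0⟩ := intermediate_value_uIcc (hφ₂cont.mono huIccs) h0mem
      have := habs z (huIccs hz)
      rw [hz0] at this
      simp at this
      linarith
  -- the phase function and its derivatives
  set g : ℝ → ℝ := fun x => T * φ x + γ * N * x + bb * Real.sqrt x - r * N * x / p
    with hg_def
  set g1 : ℝ → ℝ := fun x => T * φ₁ x + γ * N + bb * (2 * Real.sqrt x)⁻¹ - r * N / p
    with hg1_def
  set g2 : ℝ → ℝ := fun x => T * φ₂ x - bb * (4 * (x * Real.sqrt x))⁻¹ with hg2_def
  have hx_pos : ∀ x ∈ s, 0 < x := fun x hx => by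
    have := hx.1; simp only [hs_def, mem_Ioo] at hx; linarith [hx.1]
  have hsx_pos : ∀ x ∈ s, 0 < Real.sqrt x := fun x hx => Real.sqrt_pos.mpr (hx_pos x hx)
  have hd_g : ∀ x ∈ s, HasDerivAt g (g1 x) x := by
    intro x hx
    have hx0 := hx_pos x hx
    have hA : HasDerivAt (fun y => T * φ y) (T * φ₁ x) x := (hd1 x hx).const_mul T
    have hB : HasDerivAt (fun y => γ * N * y) (γ * N) x := by
      simpa using (hasDerivAt_id x).const_mul (γ * N)
    have hC : HasDerivAt (fun y => bb * Real.sqrt y) (bb * (1 / (2 * Real.sqrt x))) x :=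
      (Real.hasDerivAt_sqrt hx0.ne').const_mul bb
    have hD : HasDerivAt (fun y => (r : ℝ) * N * y / p) ((r : ℝ) * N / p) x := by
      have h1 : HasDerivAt (fun y => ((r : ℝ) * N / p) * y) ((r : ℝ) * N / p) x := by
        simpa using (hasDerivAt_id x).const_mul ((r : ℝ) * N / p)
      have h2 : (fun y => ((r : ℝ) * N / p) * y) = fun y => (r : ℝ) * N * y / p := by
        funext y; ring
      rwa [h2] at h1
    have : HasDerivAt g (T * φ₁ x + γ * N + bb * (1 / (2 * Real.sqrt x)) - (r:ℝ) * N / p) x :=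
      ((hA.add hB).add hC).sub hD
    convert this using 1
    simp only [hg1_def, one_div]
  have hd_g1 : ∀ x ∈ s, HasDerivAt g1 (g2 x) x := by
    intro x hx
    have hx0 := hx_pos x hx
    have hsx0 := hsx_pos x hx
    have h2ne : 2 * Real.sqrt x ≠ 0 := by positivity
    have hA : HasDerivAt (fun y => T * φ₁ y) (T * φ₂ x) x := (hd2 x hx).const_mul T
    have h1 : HasDerivAt (fun y => 2 * Real.sqrt y) (2 * (1 / (2 * Real.sqrt x))) x :=
      (Real.hasDerivAt_sqrt hx0.ne').const_mul 2
    have h2 := (hasDerivAt_inv h2ne).comp x h1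
    have h3 : HasDerivAt (fun y => bb * (2 * Real.sqrt y)⁻¹)
        (bb * (-((2 * Real.sqrt x) ^ 2)⁻¹ * (2 * (1 / (2 * Real.sqrt x))))) x := by
      have h4 : HasDerivAt ((fun y => y⁻¹) ∘ fun y => 2 * Real.sqrt y)
          (-((2 * Real.sqrt x) ^ 2)⁻¹ * (2 * (1 / (2 * Real.sqrt x)))) x := h2
      simpa only [Function.comp] using h4.const_mul bb
    have hsq : Real.sqrt x * Real.sqrt x = x := Real.mul_self_sqrt hx0.le
    have hval : bb * (-((2 * Real.sqrt x) ^ 2)⁻¹ * (2 * (1 / (2 * Real.sqrt x))))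
        = -(bb * (4 * (x * Real.sqrt x))⁻¹) := by
      rw [show (2 * Real.sqrt x) ^ 2 = 4 * (Real.sqrt x * Real.sqrt x) by ring, hsq]
      have h6 : Real.sqrt x ≠ 0 := hsx0.ne'
      have h7 : x ≠ 0 := hx0.ne'
      field_simp
      all_goals nlinarith [hsq]
    rw [hval] at h3
    have : HasDerivAt g1 (T * φ₂ x + -(bb * (4 * (x * Real.sqrt x))⁻¹)) x :=
      ((hA.add_const (γ * N)).add h3).sub_const ((r : ℝ) * N / p)
    convert this using 1
    all_goals (simp only [hg2_def]; ring)
  -- rewrite Jcal as an integral of f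
  have hphase : ∀ x : ℝ, T * φ x + γ * N * x + 2 * Real.sqrt (N * x * yy) / (Real.sqrt M * p)
      - r * N * x / p = g x := by
    intro x
    have h1 : N * x * yy = (N * yy) * x := by ring
    rw [h1, Real.sqrt_mul hNy x]
    simp only [hg_def, hbb_def]
    ring
  have hJ : Jcal V φ M N T γ p r yy = ∫ x in Ioi (0:ℝ), V x * e (g x) := by
    rw [Jcal]
    congr 1
    funext x
    rw [hphase x]
  set f : ℝ → ℂ := fun x => V x * e (g x) with hf_def
  have hIcc12s : Icc (1:ℝ) 2 ⊆ s := by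
    intro w hw
    exact ⟨by linarith [hw.1], by linarith [hw.2]⟩
  have hgcont : ContinuousOn g s := by
    apply ContinuousOn.sub
    apply ContinuousOn.add
    apply ContinuousOn.add
    · exact continuousOn_const.mul hφ.continuousOn
    · exact (continuous_const.mul continuous_id).continuousOn
    · exact continuousOn_const.mul Real.continuous_sqrt.continuousOn
    · exact ((continuous_const.mul continuous_id).div_const _).continuousOn
  have hecont : ContinuousOn (fun x => e (g x)) s := continuous_e.comp_continuousOn hgcont
  have hfzero : ∀ x, x ∉ Icc (1:ℝ) 2 → f x = 0 := by
    intro x hx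
    have hVx : V x = 0 := by
      by_contra hVx
      exact hx (hVsupp (Function.mem_support.mpr hVx))
    simp [hf_def, hVx]
  have hfcont : Continuous f := by
    rw [continuous_iff_continuousAt]
    intro z
    by_cases hz : z ∈ s
    · exact (hV.continuous.continuousAt).mul (hecont.continuousAt (hs_open.mem_nhds hz))
    · have hz2 : z ∈ (Icc (1:ℝ) 2)ᶜ := fun hmem => hz (hIcc12s hmem)
      have hev : f =ᶠ[nhds z] (fun _ => 0) := by
        apply Filter.eventually_of_mem ((isClosed_Icc.isOpen_compl).mem_nhds hz2)
        intro w hw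
        exact hfzero w hw
      exact hev.continuousAt
  have hred : Jcal V φ M N T γ p r yy = ∫ x in (3/4 : ℝ)..(9/4 : ℝ), f x := by
    rw [hJ]
    have h1 : ∫ x in Ioi (0:ℝ), f x = ∫ x, f x := by
      apply setIntegral_eq_integral_of_forall_compl_eq_zero
      intro x hx
      apply hfzero
      intro hmem
      exact hx (by simp; linarith [hmem.1])
    have h2 : Function.support f ⊆ Ioc (3/4 : ℝ) (9/4 : ℝ) := by
      intro x hx
      have : x ∈ Icc (1:ℝ) 2 := by
        by_contra hmem
        exact hx (hfzero x hmem)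
      exact ⟨by linarith [this.1], by linarith [this.2]⟩
    rw [h1, ← intervalIntegral.integral_eq_integral_of_support_subset h2]
  -- the key estimate
  set lam : ℝ := T * c₀ / 2 with hlam_def
  have hlam : 0 < lam := by positivity
  have hIccs : Icc (3/4 : ℝ) (9/4 : ℝ) ⊆ s := by
    intro w hw
    exact ⟨by linarith [hw.1], by linarith [hw.2]⟩
  have hg2bound : ∀ x ∈ Icc (3/4 : ℝ) (9/4 : ℝ), bb * (4 * (x * Real.sqrt x))⁻¹ ≤ lam := by
    intro x hx
    have hx0 : (0:ℝ) < x := by linarith [hx.1]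
    have hsq : Real.sqrt x * Real.sqrt x = x := Real.mul_self_sqrt hx0.le
    have hsx : (4:ℝ)/5 ≤ Real.sqrt x := by
      nlinarith [Real.sqrt_nonneg x, hx.1]
    have hden : (2:ℝ) ≤ 4 * (x * Real.sqrt x) := by nlinarith [hx.1]
    have hinv : (4 * (x * Real.sqrt x))⁻¹ ≤ (1:ℝ)/2 := by
      rw [inv_le_iff_one_le_mul₀ (by linarith)] -- maybe wrong
      · linarith
    have h1 : bb * (4 * (x * Real.sqrt x))⁻¹ ≤ bb * (1/2) :=
      mul_le_mul_of_nonneg_left hinv hbb0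
    have h2 : bb * (1/2) ≤ T * c₀ / 2 := by
      rw [hbb_def] at *
      linarith [hb]
    rw [hlam_def]
    linarith
  have hg2low : (∀ x ∈ Icc (3/4 : ℝ) (9/4 : ℝ), lam ≤ g2 x)
      ∨ (∀ x ∈ Icc (3/4 : ℝ) (9/4 : ℝ), g2 x ≤ -lam) := by
    rcases hsgn with h | h
    · left
      intro x hx
      have h1 : T * c₀ ≤ T * φ₂ x := mul_le_mul_of_nonneg_left (h x (hIccs hx)) hT.le
      have h2 := hg2bound x hx
      simp only [hg2_def]
      rw [hlam_def] at *
      linarith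
    · right
      intro x hx
      have h1 : T * φ₂ x ≤ T * (-c₀) := mul_le_mul_of_nonneg_left (h x (hIccs hx)) hT.le
      have hx0 : (0:ℝ) < x := by linarith [hx.1]
      have hterm : 0 ≤ bb * (4 * (x * Real.sqrt x))⁻¹ := by positivity
      simp only [hg2_def]
      rw [hlam_def] at *
      nlinarith
  have hg2cont : ContinuousOn g2 (Icc (3/4 : ℝ) (9/4 : ℝ)) := by
    apply ContinuousOn.sub
    · exact continuousOn_const.mul (hφ₂cont.mono hIccs)
    · apply continuousOn_const.mul
      apply ContinuousOn.inv₀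
      · exact (continuousOn_const.mul (continuous_id.continuousOn.mul
          Real.continuous_sqrt.continuousOn))
      · intro x hx
        have hx0 : (0:ℝ) < x := by linarith [hx.1]
        have := Real.sqrt_pos.mpr hx0
        positivity
  have hsup : ∀ t ∈ Icc (3/4 : ℝ) (9/4 : ℝ),
      ‖∫ x in (3/4 : ℝ)..t, e (g x)‖ ≤ 4 / Real.sqrt lam :=
    vdc_second' g g1 g2 (3/4) (9/4) lam (by norm_num) hlam
      (fun x hx => hd_g x (hIccs hx)) (fun x hx => hd_g1 x (hIccs hx)) hg2cont hg2low
  have hB0 : 0 ≤ 4 / Real.sqrt lam := by positivity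
  have hV34 : V (3/4 : ℝ) = 0 := by
    by_contra hVx
    have := hVsupp (Function.mem_support.mpr hVx)
    simp at this
    linarith [this.1]
  have hV94 : V (9/4 : ℝ) = 0 := by
    by_contra hVx
    have := hVsupp (Function.mem_support.mpr hVx)
    simp at this
    linarith [this.2]
  have hw := vdc_weighted g V (3/4) (9/4) (4 / Real.sqrt lam) s (by norm_num) hB0
    hs_open hIccs hecont hV hV34 hV94 hsup
  have hvar2 : ∫ x in (3/4 : ℝ)..(9/4 : ℝ), ‖deriv V x‖ ≤ 1 := by
    have hnn : 0 ≤ᵐ[volume.restrict (Set.Ioc (1/2 : ℝ) (5/2))] fun x => ‖deriv V x‖ := by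
      filter_upwards with x
      exact norm_nonneg _
    have hint : IntervalIntegrable (fun x => ‖deriv V x‖) volume (1/2 : ℝ) (5/2) :=
      ((hV.continuous_deriv (by simp)).norm).intervalIntegrable _ _
    calc ∫ x in (3/4 : ℝ)..(9/4 : ℝ), ‖deriv V x‖
        ≤ ∫ x in (1/2 : ℝ)..(5/2 : ℝ), ‖deriv V x‖ :=
          intervalIntegral.integral_mono_interval (by norm_num) (by norm_num) (by norm_num)
            hnn hint
      _ ≤ 1 := hVar
  calc ‖Jcal V φ M N T γ p r yy‖ = ‖∫ x in (3/4 : ℝ)..(9/4 : ℝ), f x‖ := by rw [hred]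
    _ ≤ (4 / Real.sqrt lam) * ∫ x in (3/4 : ℝ)..(9/4 : ℝ), ‖deriv V x‖ := hw
    _ ≤ (4 / Real.sqrt lam) * 1 := mul_le_mul_of_nonneg_left hvar2 hB0
    _ = 4 / Real.sqrt (T * c₀ / 2) := by rw [mul_one, hlam_def]

/-- Trivial bound for `ℒ`: under the standing hypotheses, `ℒ(x) ≪ 1/T` for all
real `x` once `T ≥ T₀`, with `C, T₀` depending only on `ε, M, c₀, c₂, U`. -/
theorem stmt13 (ε : ℝ) (hε : 0 < ε) (M : ℕ) (hM : 1 ≤ M) (c₀ c₂ : ℝ)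
    (hc₀ : 0 < c₀) (hc₂ : 0 < c₂)
    (U : ℝ → ℝ) (hU : ContDiff ℝ (⊤ : ℕ∞) U) (hUsupp : Function.support U ⊆ Set.Icc 1 2) :
    ∃ C T₀ : ℝ, 0 < C ∧ 0 < T₀ ∧
      ∀ (N T K P X γ : ℝ) (V : ℝ → ℂ) (φ : ℝ → ℝ) (p₁ p₂ : ℕ) (r₁ r₂ : ℤ),
        1 < N → 1 < T → 1 < K → 1 < P → T₀ ≤ T → X = P ^ 2 * K ^ 2 / N →
        N ^ ε ≤ K → K ≤ T ^ (1 - ε) →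
        ContDiff ℝ (⊤ : ℕ∞) V → Function.support V ⊆ Set.Icc 1 2 →
        (∫ x in (1 / 2 : ℝ)..(5 / 2), ‖deriv V x‖) ≤ 1 →
        ContDiffOn ℝ (⊤ : ℕ∞) φ (Set.Ioo (1 / 2) (5 / 2)) →
        (∀ x ∈ Set.Ioo ((1 : ℝ) / 2) (5 / 2),
          c₀ ≤ |iteratedDerivWithin 2 φ (Set.Ioo (1 / 2) (5 / 2)) x| ∧
          |iteratedDerivWithin 2 φ (Set.Ioo (1 / 2) (5 / 2)) x| ≤ c₂) →
        Nat.Prime p₁ → P ≤ (p₁ : ℝ) → (p₁ : ℝ) ≤ 2 * P →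
        Nat.Prime p₂ → P ≤ (p₂ : ℝ) → (p₂ : ℝ) ≤ 2 * P →
        ∀ x : ℝ, ‖Lcal U V φ M N T γ X p₁ p₂ r₁ r₂ x‖ ≤ C / T := by
  have hUc : Continuous U := hU.continuous
  have hUcs : HasCompactSupport U :=
    isCompact_Icc.of_isClosed_subset (isClosed_tsupport U)
      (closure_minimal hUsupp isClosed_Icc)
  have hUint : Integrable (fun y => |U y|) volume :=
    (hUc.integrable_of_hasCompactSupport hUcs).abs
  set CU : ℝ := ∫ y in Ioi (0:ℝ), |U y| with hCU_def
  have hCU0 : 0 ≤ CU := by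
    apply MeasureTheory.integral_nonneg
    intro y
    exact abs_nonneg _
  refine ⟨32 * (CU + 1) / c₀, max 2 ((4 / c₀) ^ (1/ε : ℝ)), by positivity,
    lt_of_lt_of_le (by norm_num) (le_max_left _ _), ?_⟩
  intro N T K P X γ V φ p₁ p₂ r₁ r₂ hN hT hK hP hT₀ hX hNK hKT hV hVsupp hVar hφ hφpp
    hp₁ hp₁l hp₁u hp₂ hp₂l hp₂u x
  have hTpos : (0:ℝ) < T := by linarith
  have hNpos : (0:ℝ) < N := by linarith
  have hKpos : (0:ℝ) < K := by linarith
  have hPpos : (0:ℝ) < P := by linarith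
  have hMpos : (0:ℝ) < (M:ℝ) := by exact_mod_cast hM
  -- T^ε ≥ 4/c₀
  have hTe : 4 / c₀ ≤ T ^ (ε : ℝ) := by
    have h1 : (4 / c₀) ^ (1/ε : ℝ) ≤ T := le_trans (le_max_right _ _) hT₀
    have h2 : ((4 / c₀) ^ (1/ε : ℝ)) ^ (ε : ℝ) ≤ T ^ (ε : ℝ) :=
      Real.rpow_le_rpow (Real.rpow_nonneg (by positivity) _) h1 hε.le
    rwa [← Real.rpow_mul (by positivity), one_div, inv_mul_cancel₀ hε.ne',
      Real.rpow_one] at h2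
  have hTeps_pos : (0:ℝ) < T ^ (ε : ℝ) := Real.rpow_pos_of_pos hTpos _
  have h3K : 3 * K ≤ T * c₀ := by
    have h1 : K ≤ T / T ^ (ε : ℝ) := by
      have he : T ^ ((1:ℝ) - ε) = T / T ^ (ε : ℝ) := by
        rw [Real.rpow_sub hTpos, Real.rpow_one]
      rwa [he] at hKT
    have h2 : T / T ^ (ε : ℝ) ≤ T * (c₀ / 4) := by
      rw [div_le_iff₀ hTeps_pos]
      have h4 : T * (c₀/4) * (4/c₀) ≤ T * (c₀/4) * T ^ (ε:ℝ) := by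
        apply mul_le_mul_of_nonneg_left hTe (by positivity)
      calc T = T * (c₀/4) * (4/c₀) := by field_simp
        _ ≤ _ := h4
    nlinarith
  -- per-y bound on the J factors
  have hJb : ∀ (p : ℕ) (r : ℤ), Nat.Prime p → P ≤ (p:ℝ) → ∀ y : ℝ, y ∈ Icc (1:ℝ) 2 →
      ‖Jcal V φ M N T γ p r ((M:ℝ) * X * y)‖ ≤ 4 / Real.sqrt (T * c₀ / 2) := by
    intro p r hp hpl y hy
    have hppos : (0:ℝ) < p := lt_of_lt_of_le hPpos hpl
    have hsM : (0:ℝ) < Real.sqrt M := Real.sqrt_pos.mpr hMpos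
    have hypos : (0:ℝ) < y := by linarith [hy.1]
    have hXpos : (0:ℝ) < X := by rw [hX]; positivity
    apply Jcal_bound c₀ hc₀ M N T γ hTpos V φ p r _ hV hVsupp hVar hφ
      (fun z hz => (hφpp z hz).1) (by positivity) (by positivity)
    -- the b bound
    have h1 : N * ((M:ℝ) * X * y) = (M:ℝ) * (P^2 * K^2 * y) := by
      rw [hX]; field_simp
    rw [h1, Real.sqrt_mul hMpos.le]
    have h2 : Real.sqrt (P^2 * K^2 * y) = P * K * Real.sqrt y := by
      rw [show P^2 * K^2 * y = (P*K)^2 * y by ring, Real.sqrt_mul (sq_nonneg _),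
        Real.sqrt_sq (by positivity)]
    rw [h2]
    have h3 : 2 * (Real.sqrt M * (P * K * Real.sqrt y)) / (Real.sqrt M * p)
        = 2 * (P * K * Real.sqrt y) / p := by
      field_simp
    rw [h3]
    have hsy : Real.sqrt y ≤ 3/2 := by
      rw [show (3:ℝ)/2 = Real.sqrt ((3/2)^2) from (Real.sqrt_sq (by norm_num)).symm]
      apply Real.sqrt_le_sqrt
      nlinarith [hy.2]
    rw [div_le_iff₀ hppos]
    calc 2 * (P * K * Real.sqrt y) ≤ 2 * (P * K * (3/2)) := by
          apply mul_le_mul_of_nonneg_left _ (by norm_num)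
          apply mul_le_mul_of_nonneg_left hsy (by positivity)
      _ = 3 * (P * K) := by ring
      _ ≤ 3 * (K * p) := by nlinarith
      _ ≤ T * c₀ * p := by nlinarith
  -- combine
  set B : ℝ := 4 / Real.sqrt (T * c₀ / 2) with hB_def
  have hB0 : 0 ≤ B := by positivity
  have hBB : B * B = 32 / (T * c₀) := by
    rw [hB_def, div_mul_div_comm, Real.mul_self_sqrt (by positivity)]
    field_simp
    ring
  have hptw : ∀ y ∈ Ioi (0:ℝ),
      ‖(U y : ℂ) * Jcal V φ M N T γ p₁ r₁ ((M:ℝ) * X * y) *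
        (starRingEnd ℂ) (Jcal V φ M N T γ p₂ r₂ ((M:ℝ) * X * y)) * e (-(x * y))‖
      ≤ |U y| * (32 / (T * c₀)) := by
    intro y _
    rw [norm_mul, norm_mul, norm_mul, norm_e, RCLike.norm_conj, Complex.norm_real,
      Real.norm_eq_abs, mul_one]
    by_cases hy0 : U y = 0
    · simp [hy0]
      all_goals positivity
    · have hy : y ∈ Icc (1:ℝ) 2 := hUsupp (Function.mem_support.mpr hy0)
      rw [mul_assoc]
      apply mul_le_mul_of_nonneg_left _ (abs_nonneg _)
      calc ‖Jcal V φ M N T γ p₁ r₁ ((M:ℝ) * X * y)‖ *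
            ‖Jcal V φ M N T γ p₂ r₂ ((M:ℝ) * X * y)‖
          ≤ B * B := mul_le_mul (hJb p₁ r₁ hp₁ hp₁l y hy) (hJb p₂ r₂ hp₂ hp₂l y hy)
            (norm_nonneg _) hB0
        _ = 32 / (T * c₀) := hBB
  have hLb : ‖Lcal U V φ M N T γ X p₁ p₂ r₁ r₂ x‖
      ≤ ∫ y in Ioi (0:ℝ), |U y| * (32 / (T * c₀)) := by
    rw [Lcal]
    apply MeasureTheory.norm_integral_le_of_norm_le
    · exact (hUint.mul_const _).restrict
    · filter_upwards [ae_restrict_mem measurableSet_Ioi] with y hy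
      exact hptw y hy
  have hval : ∫ y in Ioi (0:ℝ), |U y| * (32 / (T * c₀)) = CU * (32 / (T * c₀)) := by
    rw [hCU_def, ← MeasureTheory.integral_mul_const]
  calc ‖Lcal U V φ M N T γ X p₁ p₂ r₁ r₂ x‖ ≤ CU * (32 / (T * c₀)) := by
        rw [← hval]; exact hLb
    _ ≤ 32 * (CU + 1) / c₀ / T := by
        have h9 : CU * (32 / (T * c₀)) = CU * 32 / (T * c₀) := by ring
        rw [h9, div_div, div_le_div_iff₀ (by positivity) (by positivity)]
        nlinarith [mul_pos hTpos hc₀, hCU0]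
end

section
/- (Diagonal counting estimate.) Let ε > 0 and c ≥ 1. There is a constant C, depending only on ε and c, such that the following holds. Let γ be real, let N, T, K, P ≥ 2, and set R = PT/N, and assume R ≥ 1. Then Σ_p Σ_{r₁, r₂} min{1/T, P·N^ε/(K·N·|r₁ − r₂|)} ≤ C·(π*(P)·R/T + π*(P)·R·N^ε·log(2R)/(K·N)), where the outer sum runs over primes p with P ≤ p ≤ 2P, the inner sum runs over pairs of integers r₁, r₂ with p ∤ r₁r₂, |r₁ − γp| ≤ cR, |r₂ − γp| ≤ cR, and r₁ ≡ r₂ (mod p), π*(P) denotes the number of primes in [P, 2P], and for r₁ = r₂ the summand is interpreted as 1/T. -/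
/-!
For a fixed prime `p` and a fixed `r₁`, the diagonal term `r₂ = r₁` contributes `1/T`, and every
other admissible `r₂` has `r₁ - r₂ = p m` with `0 < |m| ≤ 2cR`, so bounding the minimum by its
second entry gives at most `2 (P N^ε / (K N p)) (1 + log (2cR))` by the harmonic-sum bound.
Since `p ≥ P` and there are at most `2cR + 1 ≤ 3cR` choices of `r₁`, each prime contributes
`≪ R/T + R N^ε log (2R) / (K N)`, and summing over the `π*(P)` primes gives the claim.
-/

open Finset Real

lemma sum_Icc_inv_le_one_add_log {X : ℝ} (hX : 1 ≤ X) :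
    ∑ d ∈ Icc 1 ⌊X⌋₊, (d : ℝ)⁻¹ ≤ 1 + log X := by
  have hfloor : (1 : ℝ) ≤ ⌊X⌋₊ := by exact_mod_cast Nat.one_le_floor_iff _ |>.mpr hX
  calc ∑ d ∈ Icc 1 ⌊X⌋₊, (d : ℝ)⁻¹ = harmonic ⌊X⌋₊ := by
        rw [harmonic_eq_sum_Icc]; push_cast; rfl
    _ ≤ 1 + log ⌊X⌋₊ := harmonic_le_one_add_log _
    _ ≤ 1 + log X := by gcongr; exact Nat.floor_le (by linarith)

lemma sum_inv_le_of_forall_dvd {p : ℕ} (hp : 0 < p) {X : ℝ} (hX : 1 ≤ X) {S : Finset ℕ}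
    (hS : ∀ s ∈ S, 0 < s ∧ (s : ℝ) ≤ X ∧ p ∣ s) :
    ∑ s ∈ S, (s : ℝ)⁻¹ ≤ (p : ℝ)⁻¹ * (1 + log X) := by
  have hsplit : ∀ s ∈ S, (s : ℝ)⁻¹ = (p : ℝ)⁻¹ * ((s / p : ℕ) : ℝ)⁻¹ := fun s hs => by
    rw [Nat.cast_div (hS s hs).2.2 (by positivity), inv_div]; field_simp
  have hinj : Set.InjOn (· / p) S := fun s hs t ht hst => by
    rw [← Nat.div_mul_cancel (hS s hs).2.2, ← Nat.div_mul_cancel (hS t ht).2.2]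
    exact congrArg (· * p) hst
  have himage : S.image (· / p) ⊆ Icc 1 ⌊X⌋₊ := by
    simp only [subset_iff, mem_image, mem_Icc, forall_exists_index, and_imp]
    rintro _ s hs rfl
    obtain ⟨hs0, hsX, hps⟩ := hS s hs
    refine ⟨Nat.div_pos (Nat.le_of_dvd hs0 hps) hp, Nat.le_floor ?_⟩
    exact (Nat.cast_le.mpr (Nat.div_le_self s p)).trans hsX
  calc ∑ s ∈ S, (s : ℝ)⁻¹ = (p : ℝ)⁻¹ * ∑ d ∈ S.image (· / p), (d : ℝ)⁻¹ := by
        rw [sum_image hinj, mul_sum]; exact sum_congr rfl hsplit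
    _ ≤ (p : ℝ)⁻¹ * ∑ d ∈ Icc 1 ⌊X⌋₊, (d : ℝ)⁻¹ := by gcongr
    _ ≤ (p : ℝ)⁻¹ * (1 + log X) := by gcongr; exact sum_Icc_inv_le_one_add_log hX

lemma sum_inv_abs_sub_le {p : ℕ} (hp : 0 < p) {X : ℝ} (hX : 1 ≤ X) (r₁ : ℤ) {E : Finset ℤ}
    (hE : ∀ r ∈ E, r ≠ r₁ ∧ (p : ℤ) ∣ r₁ - r ∧ |(r₁ : ℝ) - r| ≤ X) :
    ∑ r ∈ E, |(r₁ : ℝ) - r|⁻¹ ≤ 2 * ((p : ℝ)⁻¹ * (1 + log X)) := by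
  set g : ℤ → ℕ := fun r => (r₁ - r).natAbs
  have hg : ∀ r, (g r : ℝ) = |(r₁ : ℝ) - r| := fun r => by simp [g, Nat.cast_natAbs]
  have hfiber : ∀ d, #{r ∈ E | g r = d} ≤ 2 := fun d =>
    calc #{r ∈ E | g r = d} ≤ #({r₁ - d, r₁ + d} : Finset ℤ) :=
          card_le_card fun r => by simp only [mem_filter, mem_insert, mem_singleton, g]; omega
      _ ≤ 2 := card_le_two
  have himage : ∀ d ∈ E.image g, 0 < d ∧ (d : ℝ) ≤ X ∧ p ∣ d := by
    simp only [mem_image, forall_exists_index, and_imp]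
    rintro _ r hr rfl
    obtain ⟨hne, hdvd, hX⟩ := hE r hr
    exact ⟨Int.natAbs_pos.mpr (sub_ne_zero.mpr hne.symm), (hg r).symm ▸ hX, Int.natCast_dvd.mp hdvd⟩
  calc ∑ r ∈ E, |(r₁ : ℝ) - r|⁻¹ = ∑ r ∈ E, ((g r : ℕ) : ℝ)⁻¹ := by simp only [hg]
    _ = ∑ d ∈ E.image g, #{r ∈ E | g r = d} • (d : ℝ)⁻¹ := sum_comp (fun d : ℕ => (d : ℝ)⁻¹) g
    _ ≤ ∑ d ∈ E.image g, 2 • (d : ℝ)⁻¹ := by gcongr with d; exact hfiber d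
    _ = 2 * ∑ d ∈ E.image g, (d : ℝ)⁻¹ := by simp only [nsmul_eq_mul, Nat.cast_ofNat, mul_sum]
    _ ≤ 2 * ((p : ℝ)⁻¹ * (1 + log X)) := by
        gcongr; exact sum_inv_le_of_forall_dvd hp hX himage

lemma card_Icc_ceil_floor_le {u v : ℝ} (huv : u ≤ v) : (#(Icc ⌈u⌉ ⌊v⌋) : ℝ) ≤ v - u + 1 := by
  have hle : ⌈u⌉ ≤ ⌊v⌋ + 1 := by
    have : (⌈u⌉ : ℝ) < ⌊v⌋ + 1 + 1 := by
      linarith [Int.ceil_lt_add_one u, Int.lt_floor_add_one v]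
    exact Int.lt_add_one_iff.mp (by exact_mod_cast this)
  have hcard : (#(Icc ⌈u⌉ ⌊v⌋) : ℝ) = ((#(Icc ⌈u⌉ ⌊v⌋) : ℤ) : ℝ) := by norm_cast
  rw [hcard, Int.card_Icc_of_le _ _ hle]
  push_cast
  linarith [Int.le_ceil u, Int.floor_le v]

lemma abs_sub_le_of_mem_Icc_ceil_floor {u v : ℝ} {r s : ℤ} (hr : r ∈ Icc ⌈u⌉ ⌊v⌋)
    (hs : s ∈ Icc ⌈u⌉ ⌊v⌋) : |(r : ℝ) - s| ≤ v - u := by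
  simp only [mem_Icc, Int.ceil_le, Int.le_floor] at hr hs
  rw [abs_sub_le_iff]
  constructor <;> linarith

lemma one_add_log_two_mul_mul_le {c R : ℝ} (hc : 1 ≤ c) (hR : 1 ≤ R) :
    1 + log (2 * (c * R)) ≤ (3 + 2 * log c) * log (2 * R) := by
  have hlog2 : 1 / 2 < log 2 := lt_trans (by norm_num) log_two_gt_d9
  have hlog2R : log 2 ≤ log (2 * R) := log_le_log (by norm_num) (by linarith)
  have hlogc : 0 ≤ log c := log_nonneg hc
  rw [show 2 * (c * R) = c * (2 * R) by ring, log_mul (by positivity) (by positivity)]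
  nlinarith

/-- The summand of the theorem, with `A = P N^ε` and `B = K N`. -/
noncomputable def diagonalWeight (p : ℕ) (T A B : ℝ) (r₁ r₂ : ℤ) : ℝ :=
  if ¬((p : ℤ) ∣ r₁ * r₂) ∧ r₁ ≡ r₂ [ZMOD (p : ℤ)] then
    (if r₁ = r₂ then 1 / T else min (1 / T) (A / (B * |(r₁ : ℝ) - (r₂ : ℝ)|)))
  else 0

section diagonalWeight

variable {p : ℕ} {T A B : ℝ}

lemma diagonalWeight_le (hT : 0 ≤ T) (hA : 0 ≤ A) (hB : 0 ≤ B) (r₁ r₂ : ℤ) :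
    diagonalWeight p T A B r₁ r₂ ≤ (if r₂ = r₁ then 1 / T else 0) +
      (if r₂ ≠ r₁ ∧ (p : ℤ) ∣ r₁ - r₂ then A / B * |(r₁ : ℝ) - r₂|⁻¹ else 0) := by
  unfold diagonalWeight
  by_cases hw : ¬((p : ℤ) ∣ r₁ * r₂) ∧ r₁ ≡ r₂ [ZMOD (p : ℤ)]
  · rcases eq_or_ne r₁ r₂ with rfl | hne
    · rw [if_pos hw, if_pos rfl, if_pos rfl, if_neg fun h => h.1 rfl, add_zero]
    · rw [if_pos hw, if_neg hne, if_neg hne.symm, if_pos ⟨hne.symm, hw.2.symm.dvd⟩, zero_add,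
        div_mul_eq_div_div, div_eq_mul_inv]
      exact min_le_right _ _
  · rw [if_neg hw]
    split_ifs <;> positivity

lemma sum_diagonalWeight_le (hp : 0 < p) (hT : 0 ≤ T) (hA : 0 ≤ A) (hB : 0 ≤ B) {X : ℝ}
    (hX : 1 ≤ X) {I : Finset ℤ} {r₁ : ℤ} (hr₁ : r₁ ∈ I) (hI : ∀ r ∈ I, |(r₁ : ℝ) - r| ≤ X) :
    ∑ r₂ ∈ I, diagonalWeight p T A B r₁ r₂ ≤ 1 / T + A / B * (2 * ((p : ℝ)⁻¹ * (1 + log X))) := by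
  calc ∑ r₂ ∈ I, diagonalWeight p T A B r₁ r₂
      ≤ ∑ r₂ ∈ I, ((if r₂ = r₁ then 1 / T else 0) +
          (if r₂ ≠ r₁ ∧ (p : ℤ) ∣ r₁ - r₂ then A / B * |(r₁ : ℝ) - r₂|⁻¹ else 0)) :=
        sum_le_sum fun r₂ _ => diagonalWeight_le hT hA hB r₁ r₂
    _ = 1 / T + A / B * ∑ r₂ ∈ I with r₂ ≠ r₁ ∧ (p : ℤ) ∣ r₁ - r₂, |(r₁ : ℝ) - r₂|⁻¹ := by
        rw [sum_add_distrib, sum_ite_eq' I r₁, if_pos hr₁, sum_filter, mul_sum]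
        simp only [mul_ite, mul_zero]
    _ ≤ 1 / T + A / B * (2 * ((p : ℝ)⁻¹ * (1 + log X))) := by
        gcongr
        refine sum_inv_abs_sub_le hp hX r₁ fun r hr => ?_
        obtain ⟨hrI, hne, hdvd⟩ := mem_filter.mp hr
        exact ⟨hne, hdvd, hI r hrI⟩

lemma sum_sum_diagonalWeight_Icc_le (hp : 0 < p) (hT : 0 ≤ T) (hA : 0 ≤ A) (hB : 0 ≤ B)
    (x : ℝ) {y : ℝ} (hy : 1 ≤ 2 * y) :
    ∑ r₁ ∈ Icc ⌈x - y⌉ ⌊x + y⌋, ∑ r₂ ∈ Icc ⌈x - y⌉ ⌊x + y⌋, diagonalWeight p T A B r₁ r₂ ≤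
      (2 * y + 1) * (1 / T + A / B * (2 * ((p : ℝ)⁻¹ * (1 + log (2 * y))))) := by
  have hlen : x + y - (x - y) = 2 * y := by ring
  have hlog : 0 ≤ log (2 * y) := log_nonneg hy
  calc _ ≤ ∑ r₁ ∈ Icc ⌈x - y⌉ ⌊x + y⌋,
        (1 / T + A / B * (2 * ((p : ℝ)⁻¹ * (1 + log (2 * y))))) :=
        sum_le_sum fun r₁ hr₁ => sum_diagonalWeight_le hp hT hA hB hy hr₁ fun _ hr =>
          hlen ▸ abs_sub_le_of_mem_Icc_ceil_floor hr₁ hr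
    _ = #(Icc ⌈x - y⌉ ⌊x + y⌋) * (1 / T + A / B * (2 * ((p : ℝ)⁻¹ * (1 + log (2 * y))))) := by
        rw [sum_const, nsmul_eq_mul]
    _ ≤ _ := by
        gcongr
        exact hlen ▸ card_Icc_ceil_floor_le (by linarith)

lemma sum_sum_diagonalWeight_le_of_le_prime {c R P : ℝ} (hc : 1 ≤ c) (hR : 1 ≤ R)
    (hT : 0 ≤ T) (hA : 0 ≤ A) (hB : 0 ≤ B) (hP : 0 < P) (hPp : P ≤ p) (x : ℝ) :
    ∑ r₁ ∈ Icc ⌈x - c * R⌉ ⌊x + c * R⌋, ∑ r₂ ∈ Icc ⌈x - c * R⌉ ⌊x + c * R⌋,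
        diagonalWeight p T (P * A) B r₁ r₂ ≤
      3 * c * (R / T) + 6 * c * (3 + 2 * log c) * (R * A * log (2 * R) / B) := by
  have hp : 0 < p := by exact_mod_cast hP.trans_le hPp
  have hPp' : P * (p : ℝ)⁻¹ ≤ 1 := by
    rw [← div_eq_mul_inv]; exact div_le_one_of_le₀ hPp (by positivity)
  have hcR : 1 ≤ c * R := one_le_mul_of_one_le_of_one_le hc hR
  have hlog : 0 ≤ log (2 * (c * R)) := log_nonneg (by linarith)
  calc _ ≤ (2 * (c * R) + 1) *
        (1 / T + P * A / B * (2 * ((p : ℝ)⁻¹ * (1 + log (2 * (c * R)))))) :=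
        sum_sum_diagonalWeight_Icc_le hp hT (by positivity) hB x (by linarith)
    _ = (2 * (c * R) + 1) *
        (1 / T + A / B * 2 * (P * (p : ℝ)⁻¹) * (1 + log (2 * (c * R)))) := by ring
    _ ≤ (3 * (c * R)) * (1 / T + A / B * 2 * 1 * ((3 + 2 * log c) * log (2 * R))) := by
        gcongr
        · linarith
        · exact one_add_log_two_mul_mul_le hc hR
    _ = _ := by ring

end diagonalWeight

theorem stmt17_general (ε c : ℝ) (hc : 1 ≤ c) :
    ∃ C : ℝ, 0 < C ∧
      ∀ (γ N T K P R : ℝ),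
        2 ≤ N → 2 ≤ T → 2 ≤ K → 2 ≤ P → R = P * T / N → 1 ≤ R →
        (∑ p ∈ (Finset.Icc ⌈P⌉₊ ⌊2 * P⌋₊).filter Nat.Prime,
          ∑ r₁ ∈ Finset.Icc ⌈γ * p - c * R⌉ ⌊γ * p + c * R⌋,
            ∑ r₂ ∈ Finset.Icc ⌈γ * p - c * R⌉ ⌊γ * p + c * R⌋,
              if ¬((p : ℤ) ∣ r₁ * r₂) ∧ r₁ ≡ r₂ [ZMOD (p : ℤ)] then
                (if r₁ = r₂ then 1 / T
                  else min (1 / T) (P * N ^ ε / (K * N * |(r₁ : ℝ) - (r₂ : ℝ)|)))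
              else 0)
          ≤ C * ((((Finset.Icc ⌈P⌉₊ ⌊2 * P⌋₊).filter Nat.Prime).card : ℝ) * R / T +
              (((Finset.Icc ⌈P⌉₊ ⌊2 * P⌋₊).filter Nat.Prime).card : ℝ) * R * N ^ ε *
                Real.log (2 * R) / (K * N)) := by
  have hlogc : 0 ≤ log c := log_nonneg hc
  set C := 6 * c * (3 + 2 * log c)
  have h3c : 3 * c ≤ C := by nlinarith
  refine ⟨C, by positivity, fun γ N T K P R hN hT hK hP _ hR => ?_⟩
  set S := (Icc ⌈P⌉₊ ⌊2 * P⌋₊).filter Nat.Prime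
  set Y := R * N ^ ε * log (2 * R) / (K * N)
  have hblock : ∀ p ∈ S, ∑ r₁ ∈ Icc ⌈γ * p - c * R⌉ ⌊γ * p + c * R⌋,
      ∑ r₂ ∈ Icc ⌈γ * p - c * R⌉ ⌊γ * p + c * R⌋, diagonalWeight p T (P * N ^ ε) (K * N) r₁ r₂ ≤
        3 * c * (R / T) + C * Y := fun p hp =>
    sum_sum_diagonalWeight_le_of_le_prime hc hR (by linarith) (by positivity) (by positivity)
      (by linarith) (Nat.ceil_le.mp (mem_Icc.mp (mem_filter.mp hp).1).1) _
  calc _ ≤ #S • (3 * c * (R / T) + C * Y) := sum_le_card_nsmul S _ _ hblock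
    _ = 3 * c * (#S * R / T) + C * (#S * Y) := by rw [nsmul_eq_mul]; ring
    _ ≤ C * (#S * R / T) + C * (#S * Y) := by gcongr
    _ = _ := by simp only [Y]; ring

/-- Diagonal counting estimate: for primes `p ∈ [P,2P]` and integer pairs
`r₁, r₂` with `p ∤ r₁r₂`, `|rᵢ − γp| ≤ cR` and `r₁ ≡ r₂ (mod p)`,
`Σ_p Σ_{r₁,r₂} min{1/T, P N^ε/(K N |r₁−r₂|)}
  ≤ C (π*(P) R/T + π*(P) R N^ε log(2R)/(K N))`,
where the summand is `1/T` when `r₁ = r₂`, `π*(P)` is the number of primes in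
`[P,2P]`, and `C` depends only on `ε` and `c`. -/
theorem stmt17 (ε c : ℝ) (hε : 0 < ε) (hc : 1 ≤ c) :
    ∃ C : ℝ, 0 < C ∧
      ∀ (γ N T K P R : ℝ),
        2 ≤ N → 2 ≤ T → 2 ≤ K → 2 ≤ P → R = P * T / N → 1 ≤ R →
        (∑ p ∈ (Finset.Icc ⌈P⌉₊ ⌊2 * P⌋₊).filter Nat.Prime,
          ∑ r₁ ∈ Finset.Icc ⌈γ * p - c * R⌉ ⌊γ * p + c * R⌋,
            ∑ r₂ ∈ Finset.Icc ⌈γ * p - c * R⌉ ⌊γ * p + c * R⌋,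
              if ¬((p : ℤ) ∣ r₁ * r₂) ∧ r₁ ≡ r₂ [ZMOD (p : ℤ)] then
                (if r₁ = r₂ then 1 / T
                  else min (1 / T) (P * N ^ ε / (K * N * |(r₁ : ℝ) - (r₂ : ℝ)|)))
              else 0)
          ≤ C * ((((Finset.Icc ⌈P⌉₊ ⌊2 * P⌋₊).filter Nat.Prime).card : ℝ) * R / T +
              (((Finset.Icc ⌈P⌉₊ ⌊2 * P⌋₊).filter Nat.Prime).card : ℝ) * R * N ^ ε *
                Real.log (2 * R) / (K * N)) :=
  stmt17_general ε c hc
end
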